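/- Let Q be a finite quiver without oriented cycles and let Z ⊆ ℤ^{Q_1} be the set of vectors associated to primitive nonoriented cycles in Q. Then the ideal I_{C_Q} ⊆ k[S_α : α ∈ Q_1], defined as the kernel of the k-algebra homomorphism k[S_α] → k[T_i, T_i^{-1} : i ∈ Q_0] sending S_α to T_{t(α)} T_{s(α)}^{-1}, is generated by the binomials S^{u⁺} - S^{u⁻} for u ∈ Z. -/

import Mathlib

namespace QuiverCycles8

variable {V A : Type} (s t : A → V)

/-- Source of an edge of the double quiver. -/
def esrc : A ⊕ A → V
  | Sum.inl a => s a
  | Sum.inr a => t a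

/-- Target of an edge of the double quiver. -/
def etgt : A ⊕ A → V
  | Sum.inl a => t a
  | Sum.inr a => s a

/-- Formal inverse of an edge of the double quiver. -/
def erev : A ⊕ A → A ⊕ A
  | Sum.inl a => Sum.inr a
  | Sum.inr a => Sum.inl a

/-- `e :: l` is a nonoriented cycle. -/
def IsNonorientedCycle (e : A ⊕ A) (l : List (A ⊕ A)) : Prop :=
  List.Chain (fun f g => etgt s t f = esrc s t g ∧ g ≠ erev f) e l ∧
    etgt s t ((e :: l).getLast (List.cons_ne_nil e l)) = esrc s t e ∧
    (l ≠ [] → e ≠ erev ((e :: l).getLast (List.cons_ne_nil e l)))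

/-- A nonoriented cycle is primitive iff it visits every vertex at most once. -/
def IsPrimitive (e : A ⊕ A) (l : List (A ⊕ A)) : Prop :=
  ((e :: l).map (esrc s t)).Nodup

/-- The vector in `ℤ^{Q_1}` associated with a nonoriented cycle. -/
def cycVec [DecidableEq A] (c : List (A ⊕ A)) : A → ℤ :=
  fun a => (c.count (Sum.inl a) : ℤ) - (c.count (Sum.inr a) : ℤ)

/-- The binomial `S^{u⁺} - S^{u⁻}` associated with `u ∈ ℤ^{Q_1}`. -/
noncomputable def binomial (k : Type) [Field k] [Fintype A] (u : A → ℤ) :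
    MvPolynomial A k :=
  (∏ a, MvPolynomial.X a ^ (u a).toNat) - ∏ a, MvPolynomial.X a ^ (-(u a)).toNat

end QuiverCycles8

set_option linter.unusedSectionVars false

namespace QC8Proof
open QuiverCycles8 MvPolynomial

variable {V A : Type} [Fintype V] [Fintype A] [DecidableEq V] [DecidableEq A] (s t : A → V)

theorem count_eq_count {α : Type} (d : DecidableEq α) (i : BEq α) (h : @LawfulBEq α i)
    (x : α) (c : List α) :
    @List.count α i x c = @List.count α (@instBEqOfDecidableEq α d) x c := by
  haveI := d
  haveI := h
  induction c with
  | nil => rfl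
  | cons y c ih =>
    rw [@List.count_cons, @List.count_cons, ih]
    congr 1
    rcases eq_or_ne y x with hxy | hxy
    · rw [if_pos (by simp [hxy]), if_pos (by simp [hxy])]
    · rw [if_neg (by simp [hxy]), if_neg (by simp [hxy])]

/-- The column of an arrow. -/
def dv (a : A) : V → ℤ := Pi.single (t a) 1 - Pi.single (s a) 1

/-- The column of an edge of the double quiver. -/
def dd (f : A ⊕ A) : V → ℤ := Pi.single (etgt s t f) 1 - Pi.single (esrc s t f) 1

lemma dd_inl (a : A) : dd s t (Sum.inl a) = dv s t a := rfl

lemma dd_inr (a : A) : dd s t (Sum.inr a) = - dv s t a := by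
  simp [dd, dv, esrc, etgt]

@[local simp] lemma inl_beq_inl (a b : A) : ((Sum.inl a : A ⊕ A) == Sum.inl b) = (a == b) := rfl
@[local simp] lemma inr_beq_inr (a b : A) : ((Sum.inr a : A ⊕ A) == Sum.inr b) = (a == b) := rfl
@[local simp] lemma inl_beq_inr (a b : A) : ((Sum.inl a : A ⊕ A) == Sum.inr b) = false := rfl
@[local simp] lemma inr_beq_inl (a b : A) : ((Sum.inr a : A ⊕ A) == Sum.inl b) = false := rfl

/-- Telescoping sum along a chain. -/
lemma sum_dd_chain (e : A ⊕ A) (l : List (A ⊕ A))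
    (h : List.Chain (fun f g => etgt s t f = esrc s t g ∧ g ≠ erev f) e l) :
    ((e :: l).map (dd s t)).sum =
      Pi.single (etgt s t ((e :: l).getLast (List.cons_ne_nil e l))) 1
        - Pi.single (esrc s t e) 1 := by
  induction l generalizing e with
  | nil => simp [dd]
  | cons f l ih =>
    simp only [List.Chain, List.isChain_cons_cons] at h
    have hrec := ih f h.2
    rw [List.getLast_cons (List.cons_ne_nil f l)]
    simp only [List.map_cons, List.sum_cons] at hrec ⊢
    rw [hrec, dd, h.1.1]
    abel

lemma sum_cycVec_smul (c : List (A ⊕ A)) :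
    ∑ a : A, cycVec c a • dv s t a = (c.map (dd s t)).sum := by
  induction c with
  | nil => simp [cycVec]
  | cons f c ih =>
    have hstep : ∀ a, cycVec (f :: c) a = cycVec c a
        + ((if f = Sum.inl a then 1 else 0) - (if f = Sum.inr a then 1 else 0) : ℤ) := by
      intro a
      rcases f with b | b <;> by_cases hab : b = a <;>
        simp [cycVec, List.count_cons, hab, beq_iff_eq] <;> push_cast <;> ring
    simp only [hstep, add_smul, Finset.sum_add_distrib, ih, List.map_cons, List.sum_cons]
    rw [add_comm]
    congr 1
    simp only [sub_smul, ite_smul, one_smul, zero_smul, Finset.sum_sub_distrib]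
    rcases f with b | b <;>
      simp [Finset.sum_ite_eq, dd, dv, esrc, etgt, eq_comm, neg_sub]

/-- The vector of a nonoriented cycle lies in the kernel of the incidence map. -/
lemma cycVec_ker (e : A ⊕ A) (l : List (A ⊕ A)) (h : IsNonorientedCycle s t e l) :
    ∑ a : A, cycVec (e :: l) a • dv s t a = 0 := by
  rw [sum_cycVec_smul, sum_dd_chain s t e l h.1, h.2.1, sub_self]

end QC8Proof

namespace QC8Proof
open QuiverCycles8 MvPolynomial

variable {V A : Type} [Fintype V] [Fintype A] [DecidableEq V] [DecidableEq A] (s t : A → V)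
variable (k : Type) [Field k]

noncomputable def phi : MvPolynomial A k →ₐ[k] AddMonoidAlgebra k (V → ℤ) :=
  MvPolynomial.aeval (fun a : A => AddMonoidAlgebra.single (dv s t a) (1 : k))

lemma prod_single (g : A → (V → ℤ)) (S : Finset A) :
    (∏ a ∈ S, AddMonoidAlgebra.single (g a) (1 : k)) =
      AddMonoidAlgebra.single (∑ a ∈ S, g a) 1 := by
  classical
  induction S using Finset.induction with
  | empty => simp [AddMonoidAlgebra.one_def]
  | insert _ _ h ih =>
    rw [Finset.prod_insert h, Finset.sum_insert h, ih, AddMonoidAlgebra.single_mul_single,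
      one_mul]

lemma phi_prod (n : A → ℕ) :
    phi s t k (∏ a, X a ^ n a)
      = AddMonoidAlgebra.single (∑ a, (n a : ℤ) • dv s t a) 1 := by
  rw [map_prod]
  have h : ∀ a, phi s t k (X a ^ n a)
      = AddMonoidAlgebra.single ((n a : ℤ) • dv s t a) (1 : k) := by
    intro a
    rw [map_pow, phi, aeval_X, AddMonoidAlgebra.single_pow, one_pow, Nat.cast_smul_eq_nsmul]
  simp only [h]
  exact prod_single k _ _

/-- The incidence map on exponent vectors. -/
def Uv (v : A →₀ ℕ) : V → ℤ := ∑ a, (v a : ℤ) • dv s t a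

lemma phi_monomial (v : A →₀ ℕ) (c : k) :
    phi s t k (monomial v c) = AddMonoidAlgebra.single (Uv s t v) c := by
  rw [monomial_eq, Finsupp.prod_fintype _ _ (fun a => pow_zero _), map_mul, phi, aeval_C,
    ← phi]
  rw [phi_prod]
  have : (algebraMap k (AddMonoidAlgebra k (V → ℤ))) c = AddMonoidAlgebra.single 0 c := by
    rw [AddMonoidAlgebra.coe_algebraMap]; simp
  rw [this, AddMonoidAlgebra.single_mul_single, zero_add, mul_one, Uv]

lemma phi_apply (p : MvPolynomial A k) (g : V → ℤ) :
    (phi s t k p).coeff g = ∑ v ∈ p.support, if Uv s t v = g then p.coeff v else 0 := by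
  conv_lhs => rw [p.as_sum, map_sum, AddMonoidAlgebra.coeff_sum]
  rw [Finset.sum_apply' g]
  refine Finset.sum_congr rfl fun v _ => ?_
  rw [phi_monomial, AddMonoidAlgebra.coeff_single]
  exact Finsupp.single_apply

lemma phi_binomial (u : A → ℤ) (h : ∑ a, u a • dv s t a = 0) :
    phi s t k (binomial k u) = 0 := by
  rw [binomial, map_sub, phi_prod, phi_prod, sub_eq_zero]
  congr 1
  have key : ∀ a ∈ Finset.univ, (((u a).toNat : ℤ) • dv s t a)
      = ((-u a).toNat : ℤ) • dv s t a + u a • dv s t a := by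
    intro a _
    rw [← add_smul]
    congr 1
    omega
  rw [Finset.sum_congr rfl key, Finset.sum_add_distrib, h, add_zero]

lemma binomial_factor (w u : A → ℤ)
    (h1 : ∀ a, (w a).toNat = (w a - u a).toNat + (u a).toNat)
    (h2 : ∀ a, (-w a).toNat = (-(w a - u a)).toNat + (-u a).toNat) :
    binomial (A := A) k w = (∏ a, X a ^ (w a - u a).toNat) * binomial k u
      + (∏ a, X a ^ (-u a).toNat) * binomial k (fun a => w a - u a) := by
  have e1 : (∏ a, (X a : MvPolynomial A k) ^ (w a).toNat)
      = (∏ a, X a ^ (w a - u a).toNat) * ∏ a, X a ^ (u a).toNat := by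
    rw [← Finset.prod_mul_distrib]
    exact Finset.prod_congr rfl fun a _ => by rw [← pow_add, ← h1 a]
  have e2 : (∏ a, (X a : MvPolynomial A k) ^ (-w a).toNat)
      = (∏ a, X a ^ (-(w a - u a)).toNat) * ∏ a, X a ^ (-u a).toNat := by
    rw [← Finset.prod_mul_distrib]
    exact Finset.prod_congr rfl fun a _ => by rw [← pow_add, ← h2 a]
  simp only [binomial, e1, e2]
  ring

end QC8Proof

namespace QC8Proof
open QuiverCycles8 MvPolynomial

variable {V A : Type} [Fintype V] [Fintype A] [DecidableEq V] [DecidableEq A] (s t : A → V)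

lemma cycVec_def (c : List (A ⊕ A)) (a : A) :
    cycVec c a = (c.count (Sum.inl a) : ℤ) - (c.count (Sum.inr a) : ℤ) := rfl

lemma exists_good_cycle (w : A → ℤ) (hw : ∃ a, w a ≠ 0)
    (hker : ∑ a, w a • dv s t a = 0) :
    ∃ (e : A ⊕ A) (l : List (A ⊕ A)), IsNonorientedCycle s t e l ∧ IsPrimitive s t e l ∧
      (∀ a, cycVec (e :: l) a = 0 ∨ (cycVec (e :: l) a = 1 ∧ 1 ≤ w a) ∨
        (cycVec (e :: l) a = -1 ∧ w a ≤ -1)) ∧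
      (∃ a, cycVec (e :: l) a ≠ 0) := by
  classical
  set wt : A ⊕ A → ℤ := Sum.elim w (fun a => -w a) with hwt_def
  have hwt_erev : ∀ f, wt (erev f) = - wt f := by
    rintro (a | a) <;> simp [erev, hwt_def]
  -- flow conservation
  have hcons : ∀ f : A ⊕ A, 0 < wt f → ∃ g, 0 < wt g ∧ esrc s t g = etgt s t f := by
    intro f hf
    by_contra hno
    push_neg at hno
    set v := etgt s t f with hv
    have hzero : ∑ a, w a * ((if v = t a then (1:ℤ) else 0) - if v = s a then 1 else 0) = 0 := by
      have hk := congrFun hker v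
      rw [Finset.sum_apply] at hk
      simp only [Pi.zero_apply] at hk
      refine Eq.trans (Finset.sum_congr rfl fun a _ => ?_) hk
      simp [dv, Pi.single_apply, smul_eq_mul]
    have h1 : ∀ a, s a = v → w a ≤ 0 := by
      intro a ha
      by_contra hpos
      push_neg at hpos
      exact hno (Sum.inl a) (by simpa [hwt_def] using hpos) (by simpa [esrc] using ha)
    have h2 : ∀ a, t a = v → 0 ≤ w a := by
      intro a ha
      by_contra hneg
      push_neg at hneg
      exact hno (Sum.inr a) (by simp [hwt_def]; omega) (by simpa [esrc] using ha)
    have hnonneg : ∀ a ∈ Finset.univ,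
        0 ≤ w a * ((if v = t a then (1:ℤ) else 0) - if v = s a then 1 else 0) := by
      intro a _
      rcases em (v = t a) with ht | ht <;> rcases em (v = s a) with hs | hs
      · rw [if_pos ht, if_pos hs]; simp
      · rw [if_pos ht, if_neg hs]
        have := h2 a ht.symm
        nlinarith
      · rw [if_neg ht, if_pos hs]
        have := h1 a hs.symm
        nlinarith
      · rw [if_neg ht, if_neg hs]; simp
    have hall := (Finset.sum_eq_zero_iff_of_nonneg hnonneg).mp hzero
    rcases f with a | a
    · have hterm := hall a (Finset.mem_univ a)
      have hfa : 0 < w a := by simpa [hwt_def] using hf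
      have htv : v = t a := rfl
      by_cases hs : v = s a
      · have := h1 a hs.symm; omega
      · rw [if_pos htv, if_neg hs] at hterm; omega
    · have hterm := hall a (Finset.mem_univ a)
      have hfa : w a < 0 := by
        have : 0 < -w a := by simpa [hwt_def] using hf
        omega
      have hsv : v = s a := rfl
      by_cases ht : v = t a
      · have := h2 a ht.symm; omega
      · rw [if_neg ht, if_pos hsv] at hterm; omega
  -- the walking sequence
  have hstep : ∀ f : {f : A ⊕ A // 0 < wt f},
      ∃ g : {f : A ⊕ A // 0 < wt f}, esrc s t g.1 = etgt s t f.1 := by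
    rintro ⟨f, hf⟩
    obtain ⟨g, hg1, hg2⟩ := hcons f hf
    exact ⟨⟨g, hg1⟩, hg2⟩
  choose nxt hnxt using hstep
  obtain ⟨a0, ha0⟩ := hw
  have hf0 : ∃ f0 : A ⊕ A, 0 < wt f0 := by
    rcases lt_or_gt_of_ne ha0 with h | h
    · exact ⟨Sum.inr a0, by simp [hwt_def]; omega⟩
    · exact ⟨Sum.inl a0, by simpa [hwt_def] using h⟩
  obtain ⟨f0, hf0⟩ := hf0
  set seq : ℕ → {f : A ⊕ A // 0 < wt f} := fun n => nxt^[n] ⟨f0, hf0⟩ with hseq_def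
  have hseq : ∀ n, esrc s t (seq (n+1)).1 = etgt s t (seq n).1 := by
    intro n
    have : seq (n+1) = nxt (seq n) := Function.iterate_succ_apply' nxt n _
    rw [this]
    exact hnxt _
  -- pigeonhole
  have hpig : ∃ j, ∃ i, i < j ∧ esrc s t (seq i).1 = esrc s t (seq j).1 := by
    obtain ⟨x, y, hxy, hexy⟩ := Fintype.exists_ne_map_eq_of_card_lt
      (fun n : Fin (Fintype.card V + 1) => esrc s t (seq n.1).1) (by simp)
    rcases lt_or_gt_of_ne (fun h : x.1 = y.1 => hxy (Fin.ext h)) with h | h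
    · exact ⟨y.1, x.1, h, hexy⟩
    · exact ⟨x.1, y.1, h, hexy.symm⟩
  set J := Nat.find hpig with hJdef
  obtain ⟨i, hiJ, heq⟩ := Nat.find_spec hpig
  rw [← hJdef] at hiJ heq
  have hmin : ∀ p q, p < q → q < J → esrc s t (seq p).1 ≠ esrc s t (seq q).1 :=
    fun p q hpq hqJ habs => Nat.find_min hpig hqJ ⟨p, hpq, habs⟩
  -- the cycle
  set m : ℕ := J - i with hmdef
  have hm1 : 1 ≤ m := by omega
  set e : A ⊕ A := (seq i).1 with hedef
  set l : List (A ⊕ A) := (List.range' (i+1) (m-1)).map (fun n => (seq n).1) with hldef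
  have hc : e :: l = (List.range' i m).map (fun n => (seq n).1) := by
    rw [show m = (m-1)+1 by omega, List.range'_succ, List.map_cons]
  -- chain property
  have chain : ∀ (len st : ℕ), List.Chain (fun f g => etgt s t f = esrc s t g ∧ g ≠ erev f)
      ((seq st).1) ((List.range' (st+1) len).map (fun n => (seq n).1)) := by
    intro len
    induction len with
    | zero => intro st; exact List.Chain.nil
    | succ len ih =>
      intro st
      rw [List.range'_succ, List.map_cons]
      refine List.Chain.cons ⟨(hseq st).symm, ?_⟩ ?_
      · intro hbad
        have h1 : 0 < wt (seq (st+1)).1 := (seq (st+1)).2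
        rw [hbad, hwt_erev] at h1
        have h2 : 0 < wt (seq st).1 := (seq st).2
        omega
      · have := ih (st+1)
        simpa using this
  -- last element
  have hlast : ∀ (len st : ℕ),
      (((seq st).1) :: (List.range' (st+1) len).map (fun n => (seq n).1)).getLast
        (List.cons_ne_nil _ _) = (seq (st + len)).1 := by
    intro len
    induction len with
    | zero => intro st; simp
    | succ len ih =>
      intro st
      rw [List.range'_succ, List.map_cons, List.getLast_cons (List.cons_ne_nil _ _),
        show st + (len+1) = (st+1) + len from by omega]
      exact ih (st+1)
  have hlast' : (e :: l).getLast (List.cons_ne_nil e l) = (seq (J-1)).1 := by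
    rw [hedef, hldef, hlast (m-1) i, show i + (m-1) = J - 1 from by omega]
  -- closure
  have hclose : etgt s t (seq (J-1)).1 = esrc s t e := by
    have : esrc s t (seq ((J-1)+1)).1 = etgt s t (seq (J-1)).1 := hseq (J-1)
    rw [show (J-1)+1 = J by omega] at this
    rw [← this, hedef]
    exact heq.symm
  -- membership implies positive weight
  have hmem : ∀ f ∈ e :: l, 0 < wt f := by
    intro f hf
    rw [hc] at hf
    obtain ⟨n, _, rfl⟩ := List.mem_map.mp hf
    exact (seq n).2
  -- cycle
  have hcyc : IsNonorientedCycle s t e l := by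
    refine ⟨by simpa [hldef] using chain (m-1) i, by rw [hlast']; exact hclose, ?_⟩
    intro _ hbad
    have h1 : 0 < wt e := hmem e List.mem_cons_self
    rw [hbad, hlast', hwt_erev] at h1
    have h2 : 0 < wt (seq (J-1)).1 := (seq (J-1)).2
    omega
  -- primitive
  have hprim : IsPrimitive s t e l := by
    rw [IsPrimitive, hc, List.map_map]
    refine List.Nodup.map_on ?_ List.nodup_range'
    intro p hp q hq hpqeq
    rw [List.mem_range'] at hp hq
    obtain ⟨kp, hkp, rfl⟩ := hp
    obtain ⟨kq, hkq, rfl⟩ := hq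
    by_contra hne
    rcases lt_trichotomy (i + 1 * kp) (i + 1 * kq) with h | h | h
    · exact hmin _ _ h (by omega) hpqeq
    · exact hne (by omega)
    · exact hmin _ _ h (by omega) hpqeq.symm
  have hnodup : (e :: l).Nodup := List.Nodup.of_map _ hprim
  -- count facts
  have hnotboth : ∀ a, Sum.inl a ∈ e :: l → Sum.inr a ∈ e :: l → False := by
    intro a h1 h2
    have ha := hmem _ h1
    have hb := hmem _ h2
    rw [hwt_def] at ha hb
    simp only [Sum.elim_inl, Sum.elim_inr] at ha hb
    omega
  have lawful_sum : @LawfulBEq (A ⊕ A) Sum.instBEq := by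
    haveI : @ReflBEq (A ⊕ A) Sum.instBEq := by
      constructor
      rintro (a | a) <;> simp [inl_beq_inl, inr_beq_inr]
    constructor
    · rintro (a | a) (b | b) h <;>
        simp only [inl_beq_inl, inr_beq_inr, inl_beq_inr, inr_beq_inl, beq_iff_eq] at h <;>
        first | (exact congrArg _ h) | exact absurd h (by simp)
  have hcount1 : ∀ f : A ⊕ A, f ∈ e :: l → (e :: l).count f = 1 := by
    intro f hf
    exact (count_eq_count _ Sum.instBEq lawful_sum f (e :: l)).trans
      (@List.count_eq_one_of_mem _ instBEqOfDecidableEq inferInstance _ _ hnodup hf)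
  have hcount0 : ∀ f : A ⊕ A, f ∉ e :: l → (e :: l).count f = 0 := by
    intro f hf
    exact (count_eq_count _ Sum.instBEq lawful_sum f (e :: l)).trans
      (@List.count_eq_zero_of_not_mem _ instBEqOfDecidableEq inferInstance _ _ hf)
  have hone : ∀ a, Sum.inl a ∈ e :: l → cycVec (e :: l) a = 1 ∧ 1 ≤ w a := by
    intro a hl1
    have hr1 : Sum.inr a ∉ e :: l := fun h2 => hnotboth a hl1 h2
    constructor
    · rw [cycVec_def, hcount1 _ hl1, hcount0 _ hr1]
      simp
    · have := hmem _ hl1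
      rw [hwt_def] at this
      simp at this; omega
  have hmone : ∀ a, Sum.inr a ∈ e :: l → cycVec (e :: l) a = -1 ∧ w a ≤ -1 := by
    intro a hr1
    have hl1 : Sum.inl a ∉ e :: l := fun h2 => hnotboth a h2 hr1
    constructor
    · rw [cycVec_def, hcount1 _ hr1, hcount0 _ hl1]
      simp
    · have := hmem _ hr1
      rw [hwt_def] at this
      simp only [Sum.elim_inr] at this
      omega
  have hval : ∀ a, cycVec (e :: l) a = 0 ∨ (cycVec (e :: l) a = 1 ∧ 1 ≤ w a) ∨
      (cycVec (e :: l) a = -1 ∧ w a ≤ -1) := by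
    intro a
    by_cases hl1 : Sum.inl a ∈ e :: l
    · exact Or.inr (Or.inl (hone a hl1))
    · by_cases hr1 : Sum.inr a ∈ e :: l
      · exact Or.inr (Or.inr (hmone a hr1))
      · left
        rw [cycVec_def, hcount0 _ hl1, hcount0 _ hr1]
        simp
  refine ⟨e, l, hcyc, hprim, hval, ?_⟩
  have hsplit : (∀ f : A ⊕ A, (∃ a, f = Sum.inl a) ∨ (∃ a, f = Sum.inr a)) := by
    rintro (a | a)
    · exact Or.inl ⟨a, rfl⟩
    · exact Or.inr ⟨a, rfl⟩
  rcases hsplit e with ⟨a, ha⟩ | ⟨a, ha⟩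
  · refine ⟨a, ?_⟩
    have hl1 : Sum.inl a ∈ e :: l := ha ▸ List.mem_cons_self (a := e) (l := l)
    rw [(hone a hl1).1]
    omega
  · refine ⟨a, ?_⟩
    have hr1 : Sum.inr a ∈ e :: l := ha ▸ List.mem_cons_self (a := e) (l := l)
    rw [(hmone a hr1).1]
    omega

end QC8Proof

namespace QC8Proof
open QuiverCycles8 MvPolynomial

variable {V A : Type} [Fintype V] [Fintype A] [DecidableEq V] [DecidableEq A] (s t : A → V)
variable (k : Type) [Field k]

def Zset : Set (MvPolynomial A k) := {p : MvPolynomial A k | ∃ (e : A ⊕ A) (l : List (A ⊕ A)),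
  IsNonorientedCycle s t e l ∧ IsPrimitive s t e l ∧ p = binomial (A := A) k (cycVec (e :: l))}

lemma binomial_zero (w : A → ℤ) (hw : ∀ a, w a = 0) : binomial (A := A) k w = 0 := by
  rw [binomial, sub_eq_zero]
  refine Finset.prod_congr rfl fun a _ => ?_
  rw [hw a]
  norm_num

lemma binomial_mem_span (N : ℕ) : ∀ w : A → ℤ, (∑ a, (w a).natAbs) ≤ N →
    (∑ a, w a • dv s t a) = 0 → binomial (A := A) k w ∈ Ideal.span (Zset s t k) := by
  induction N with
  | zero =>
    intro w hN _
    have hw : ∀ a, w a = 0 := by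
      intro a
      have h1 := (Finset.sum_eq_zero_iff.mp (Nat.le_zero.mp hN)) a (Finset.mem_univ a)
      omega
    rw [binomial_zero k w hw]
    exact Ideal.zero_mem _
  | succ N ih =>
    intro w hN hker
    by_cases hz : ∀ a, w a = 0
    · rw [binomial_zero k w hz]
      exact Ideal.zero_mem _
    · push_neg at hz
      obtain ⟨e, l, hcyc, hprim, hval, hne0⟩ := exists_good_cycle s t w hz hker
      set u := cycVec (e :: l) with hu
      have huker : ∑ a, u a • dv s t a = 0 := cycVec_ker s t e l hcyc
      have h1 : ∀ a, (w a).toNat = (w a - u a).toNat + (u a).toNat := by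
        intro a; rcases hval a with h | ⟨h, h'⟩ | ⟨h, h'⟩ <;> omega
      have h2 : ∀ a, (-w a).toNat = (-(w a - u a)).toNat + (-u a).toNat := by
        intro a; rcases hval a with h | ⟨h, h'⟩ | ⟨h, h'⟩ <;> omega
      have hwu_ker : ∑ a, (w a - u a) • dv s t a = 0 := by
        simp only [sub_smul, Finset.sum_sub_distrib, hker, huker, sub_zero]
      have hlt : ∑ a, (w a - u a).natAbs ≤ N := by
        have hstrict : ∑ a, (w a - u a).natAbs < ∑ a, (w a).natAbs := by
          obtain ⟨a0, ha0⟩ := hne0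
          refine Finset.sum_lt_sum (fun a _ => ?_) ⟨a0, Finset.mem_univ a0, ?_⟩
          · rcases hval a with h | ⟨h, h'⟩ | ⟨h, h'⟩ <;> omega
          · rcases hval a0 with h | ⟨h, h'⟩ | ⟨h, h'⟩ <;> omega
        omega
      have hbu : binomial k u ∈ Ideal.span (Zset s t k) :=
        Ideal.subset_span ⟨e, l, hcyc, hprim, rfl⟩
      have hbwu : binomial k (fun a => w a - u a) ∈ Ideal.span (Zset s t k) :=
        ih _ hlt hwu_ker
      rw [binomial_factor k w u h1 h2]
      exact Ideal.add_mem _ (Ideal.mul_mem_left _ _ hbu) (Ideal.mul_mem_left _ _ hbwu)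

lemma ker_sub_span (n : ℕ) : ∀ p : MvPolynomial A k, p.support.card ≤ n →
    phi s t k p = 0 → p ∈ Ideal.span (Zset s t k) := by
  induction n with
  | zero =>
    intro p hp _
    have hp0 : p = 0 := by
      rw [← MvPolynomial.support_eq_empty, ← Finset.card_eq_zero]
      omega
    rw [hp0]
    exact Ideal.zero_mem _
  | succ n ih =>
    intro p hp hker
    by_cases h0 : p = 0
    · rw [h0]; exact Ideal.zero_mem _
    obtain ⟨v, hv⟩ := MvPolynomial.support_nonempty.mpr h0
    have hcv : p.coeff v ≠ 0 := MvPolynomial.mem_support_iff.mp hv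
    have hsum : ∑ x ∈ p.support.filter (fun x => Uv s t x = Uv s t v), p.coeff x = 0 := by
      have h := phi_apply s t k p (Uv s t v)
      rw [hker] at h
      simp only [AddMonoidAlgebra.coeff_zero, Finsupp.coe_zero, Pi.zero_apply] at h
      rw [Finset.sum_filter]
      exact h.symm
    have hvfil : v ∈ p.support.filter (fun x => Uv s t x = Uv s t v) :=
      Finset.mem_filter.mpr ⟨hv, rfl⟩
    have hex : ∃ v' ∈ p.support.filter (fun x => Uv s t x = Uv s t v), v' ≠ v := by
      by_contra hcon
      push_neg at hcon
      have hsing : p.support.filter (fun x => Uv s t x = Uv s t v) = {v} :=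
        Finset.eq_singleton_iff_unique_mem.mpr ⟨hvfil, hcon⟩
      rw [hsing, Finset.sum_singleton] at hsum
      exact hcv hsum
    obtain ⟨v', hv'fil, hv'ne⟩ := hex
    have hv'sup : v' ∈ p.support := (Finset.mem_filter.mp hv'fil).1
    have hUv' : Uv s t v' = Uv s t v := (Finset.mem_filter.mp hv'fil).2
    set b : MvPolynomial A k := monomial v 1 - monomial v' 1 with hbdef
    have hbker : phi s t k b = 0 := by
      rw [hbdef, map_sub, phi_monomial, phi_monomial, hUv', sub_self]
    have hbspan : b ∈ Ideal.span (Zset s t k) := by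
      set wv : A → ℤ := fun a => (v a : ℤ) - (v' a : ℤ) with hwvdef
      have hwker : ∑ a, wv a • dv s t a = 0 := by
        simp only [hwvdef, sub_smul, Finset.sum_sub_distrib]
        have e1 : ∑ a, ((v a : ℤ)) • dv s t a = Uv s t v := rfl
        have e2 : ∑ a, ((v' a : ℤ)) • dv s t a = Uv s t v' := rfl
        rw [e1, e2, hUv', sub_self]
      have hmono : ∀ ν : A →₀ ℕ, monomial ν (1:k) = ∏ a, X a ^ ν a := by
        intro ν
        rw [monomial_eq, Finsupp.prod_fintype _ _ (fun a => pow_zero _), map_one, one_mul]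
      have hb : b = (∏ a, X a ^ (min (v a) (v' a))) * binomial k wv := by
        rw [hbdef, binomial, mul_sub]
        congr 1
        · rw [← Finset.prod_mul_distrib, hmono v]
          refine Finset.prod_congr rfl fun a _ => ?_
          rw [← pow_add]
          congr 1
          simp only [hwvdef]
          omega
        · rw [← Finset.prod_mul_distrib, hmono v']
          refine Finset.prod_congr rfl fun a _ => ?_
          rw [← pow_add]
          congr 1
          simp only [hwvdef]
          omega
      rw [hb]
      exact Ideal.mul_mem_left _ _
        (binomial_mem_span s t k (∑ a, (wv a).natAbs) wv le_rfl hwker)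
    set q : MvPolynomial A k := p - C (p.coeff v) * b with hqdef
    have hqker : phi s t k q = 0 := by
      rw [hqdef, map_sub, map_mul, hker, hbker, mul_zero, sub_zero]
    have hcoeffb : ∀ x, b.coeff x = (if v = x then (1:k) else 0) - if v' = x then 1 else 0 := by
      intro x
      rw [hbdef, MvPolynomial.coeff_sub, MvPolynomial.coeff_monomial,
        MvPolynomial.coeff_monomial]
    have hqsupp : q.support ⊆ p.support.erase v := by
      intro x hx
      have hqx : q.coeff x ≠ 0 := MvPolynomial.mem_support_iff.mp hx
      rw [Finset.mem_erase]
      constructor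
      · intro hxv
        apply hqx
        rw [hqdef, MvPolynomial.coeff_sub, MvPolynomial.coeff_C_mul, hcoeffb, hxv,
          if_pos rfl, if_neg (hxv ▸ hv'ne)]
        ring
      · by_contra hxp
        apply hqx
        have hpx : p.coeff x = 0 := MvPolynomial.notMem_support_iff.mp hxp
        have hxv : v ≠ x := fun h => hxp (h ▸ hv)
        have hxv' : v' ≠ x := fun h => hxp (h ▸ hv'sup)
        rw [hqdef, MvPolynomial.coeff_sub, MvPolynomial.coeff_C_mul, hcoeffb, hpx,
          if_neg hxv, if_neg hxv']
        ring
    have hqcard : q.support.card ≤ n := by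
      have hc1 := Finset.card_le_card hqsupp
      have hc2 := Finset.card_erase_of_mem hv
      omega
    have hqspan := ih q hqcard hqker
    have hpq : p = q + C (p.coeff v) * b := by rw [hqdef]; ring
    rw [hpq]
    exact Ideal.add_mem _ hqspan (Ideal.mul_mem_left _ _ hbspan)

end QC8Proof



open QuiverCycles8 in
/-- for a finite quiver `Q` without oriented cycles, the toric ideal `I_{C_Q}`,
i.e. the kernel of `k[S_α] → k[T_i, T_i⁻¹]`, `S_α ↦ T_{t α} T_{s α}⁻¹` (the Laurent polynomial
ring being realized as the group algebra of `ℤ^{Q_0}`), is generated by the binomials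
`S^{u⁺} - S^{u⁻}` where `u` runs through the vectors of primitive nonoriented cycles of `Q`. -/
theorem toric_ideal_generated_by_primitive_cycles
    {V A : Type} [Fintype V] [Fintype A] [DecidableEq V] [DecidableEq A]
    (s t : A → V)
    (hacyc : ∀ v : V, ¬ Relation.TransGen (fun u w : V => ∃ a : A, s a = u ∧ t a = w) v v)
    (k : Type) [Field k] :
    RingHom.ker (MvPolynomial.aeval (R := k)
        (fun a : A => AddMonoidAlgebra.single (Pi.single (t a) 1 - Pi.single (s a) 1 : V → ℤ)
          (1 : k))).toRingHom =
      Ideal.span {p : MvPolynomial A k | ∃ (e : A ⊕ A) (l : List (A ⊕ A)),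
        IsNonorientedCycle s t e l ∧ IsPrimitive s t e l ∧
        p = binomial (A := A) k (cycVec (e :: l))} := by

  apply le_antisymm
  · intro p hp
    rw [RingHom.mem_ker] at hp
    exact QC8Proof.ker_sub_span s t k p.support.card p le_rfl hp
  · rw [Ideal.span_le]
    rintro p ⟨e, l, hcyc, hprim, rfl⟩
    rw [SetLike.mem_coe, RingHom.mem_ker]
    exact QC8Proof.phi_binomial s t k _ (QC8Proof.cycVec_ker s t e l hcyc)
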